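/- For every continuous function f : ℝ^d → ℝ there exists a homeomorphism ψ of ℝ^d onto itself such that the composition f ∘ ψ is uniformly continuous on ℝ^d. -/

import Mathlib

open Metric Set Filter Function

noncomputable section

namespace Stmt3Aux

variable {E : Type*} [NormedAddCommGroup E] [NormedSpace ℝ E]

/-- Radial map with profile `k`. -/
def radMap (k : ℝ → ℝ) (x : E) : E := (k ‖x‖ / ‖x‖) • x

lemma radMap_zero (k : ℝ → ℝ) : radMap k (0 : E) = 0 := by simp [radMap]

lemma norm_radMap (k : ℝ → ℝ) (hk0 : k 0 = 0) (hknn : ∀ r, 0 ≤ r → 0 ≤ k r) (x : E) :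
    ‖radMap k x‖ = k ‖x‖ := by
  rcases eq_or_ne x 0 with rfl | hx
  · simp [radMap, hk0]
  · have hx' : (0:ℝ) < ‖x‖ := norm_pos_iff.mpr hx
    rw [radMap, norm_smul, Real.norm_eq_abs,
      abs_of_nonneg (div_nonneg (hknn _ (norm_nonneg x)) (norm_nonneg x))]
    field_simp

lemma continuous_radMap (k : ℝ → ℝ) (hk : Continuous k) (hk0 : k 0 = 0)
    (hknn : ∀ r, 0 ≤ r → 0 ≤ k r) : Continuous (radMap (E := E) k) := by
  rw [continuous_iff_continuousAt]
  intro x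
  rcases eq_or_ne x 0 with rfl | hx
  · rw [ContinuousAt, radMap_zero]
    apply squeeze_zero_norm (fun y => le_of_eq (norm_radMap k hk0 hknn y))
    have h1 : Tendsto (fun y : E => k ‖y‖) (nhds 0) (nhds (k ‖(0:E)‖)) :=
      (hk.comp continuous_norm).tendsto 0
    simpa [hk0] using h1
  · have hx' : ‖x‖ ≠ 0 := norm_ne_zero_iff.mpr hx
    exact (((hk.comp continuous_norm).continuousAt.div
      continuous_norm.continuousAt hx').smul continuousAt_id)

lemma radMap_radMap (k₁ k₂ : ℝ → ℝ) (hk₁0 : k₁ 0 = 0) (h₁nn : ∀ r, 0 ≤ r → 0 ≤ k₁ r)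
    (hpos : ∀ r, 0 < r → 0 < k₁ r) (hinv : ∀ r, 0 ≤ r → k₂ (k₁ r) = r) (x : E) :
    radMap k₂ (radMap k₁ x) = x := by
  rcases eq_or_ne x 0 with rfl | hx
  · simp [radMap_zero]
  · have ha : (0:ℝ) < ‖x‖ := norm_pos_iff.mpr hx
    have hnorm : ‖radMap k₁ x‖ = k₁ ‖x‖ := norm_radMap k₁ hk₁0 h₁nn x
    have hka : (0:ℝ) < k₁ ‖x‖ := hpos _ ha
    rw [radMap, hnorm, hinv _ ha.le, radMap, smul_smul]
    have : ‖x‖ / k₁ ‖x‖ * (k₁ ‖x‖ / ‖x‖) = 1 := by field_simp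
    rw [this, one_smul]

/-- The key distance estimate for radial maps. -/
lemma norm_radMap_sub_le (k : ℝ → ℝ) (hk0 : k 0 = 0) (x y : E) (hba : ‖y‖ ≤ ‖x‖)
    (c B : ℝ) (hcnn : 0 ≤ c) (hBnn : 0 ≤ B) (hB : k ‖x‖ - k ‖y‖ ≤ B)
    (hmono : k ‖y‖ ≤ k ‖x‖) (hynn : 0 ≤ k ‖y‖) (hc : k ‖x‖ ≤ c * ‖x‖) :
    ‖radMap k x - radMap k y‖ ≤ 2 * c * ‖x - y‖ + B := by
  rcases eq_or_ne x 0 with rfl | hx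
  · have hy : y = 0 := norm_le_zero_iff.mp (by simpa using hba)
    subst hy
    simp only [radMap_zero, sub_zero, norm_zero]
    positivity
  · have ha : (0:ℝ) < ‖x‖ := norm_pos_iff.mpr hx
    have hxy : ‖x‖ - ‖y‖ ≤ ‖x - y‖ := norm_sub_norm_le x y
    have hknn : 0 ≤ k ‖x‖ := hynn.trans hmono
    have hca : k ‖x‖ / ‖x‖ ≤ c := (div_le_iff₀ ha).mpr hc
    have hcann : 0 ≤ k ‖x‖ / ‖x‖ := div_nonneg hknn ha.le
    rcases eq_or_ne y 0 with rfl | hy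
    · have : ‖radMap k x - radMap k 0‖ = k ‖x‖ / ‖x‖ * ‖x‖ := by
        rw [radMap_zero, sub_zero, radMap, norm_smul, Real.norm_eq_abs,
          abs_of_nonneg hcann]
      rw [this]
      have h1 : k ‖x‖ / ‖x‖ * ‖x‖ = k ‖x‖ := by field_simp
      have h2 : k ‖x‖ ≤ B := by simpa [hk0] using hB
      have : (0:ℝ) ≤ 2 * c * ‖x - 0‖ := by positivity
      linarith
    · have hb : (0:ℝ) < ‖y‖ := norm_pos_iff.mpr hy
      have hsplit : radMap k x - radMap k y =
          (k ‖x‖ / ‖x‖) • (x - y) + (k ‖x‖ / ‖x‖ - k ‖y‖ / ‖y‖) • y := by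
        simp only [radMap, smul_sub, sub_smul]
        abel
      rw [hsplit]
      have h1 : ‖(k ‖x‖ / ‖x‖) • (x - y)‖ ≤ c * ‖x - y‖ := by
        rw [norm_smul, Real.norm_eq_abs, abs_of_nonneg hcann]
        exact mul_le_mul_of_nonneg_right hca (norm_nonneg _)
      have h2 : ‖(k ‖x‖ / ‖x‖ - k ‖y‖ / ‖y‖) • y‖ ≤ B + c * ‖x - y‖ := by
        rw [norm_smul, Real.norm_eq_abs]
        have key : |k ‖x‖ / ‖x‖ - k ‖y‖ / ‖y‖| * ‖y‖
            = |(k ‖x‖ - k ‖y‖) - (‖x‖ - ‖y‖) / ‖x‖ * k ‖x‖| := by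
          rw [← abs_of_nonneg hb.le, ← abs_mul]
          congr 1
          field_simp
          rw [abs_of_nonneg hb.le]; ring
        rw [key]
        have habs : |(k ‖x‖ - k ‖y‖) - (‖x‖ - ‖y‖) / ‖x‖ * k ‖x‖|
            ≤ |k ‖x‖ - k ‖y‖| + |(‖x‖ - ‖y‖) / ‖x‖ * k ‖x‖| := abs_sub _ _
        have e1 : |k ‖x‖ - k ‖y‖| = k ‖x‖ - k ‖y‖ := abs_of_nonneg (by linarith)
        have e2nn : 0 ≤ (‖x‖ - ‖y‖) / ‖x‖ * k ‖x‖ := by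
          apply mul_nonneg (div_nonneg (by linarith) ha.le) hknn
        have e2 : |(‖x‖ - ‖y‖) / ‖x‖ * k ‖x‖| = (‖x‖ - ‖y‖) / ‖x‖ * k ‖x‖ :=
          abs_of_nonneg e2nn
        have e3 : (‖x‖ - ‖y‖) / ‖x‖ * k ‖x‖ ≤ c * ‖x - y‖ := by
          calc (‖x‖ - ‖y‖) / ‖x‖ * k ‖x‖ = (‖x‖ - ‖y‖) * (k ‖x‖ / ‖x‖) := by ring
            _ ≤ ‖x - y‖ * c := mul_le_mul (by linarith) hca hcann (norm_nonneg _)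
            _ = c * ‖x - y‖ := mul_comm _ _
        rw [e1, e2] at habs
        linarith
      calc ‖(k ‖x‖ / ‖x‖) • (x - y) + (k ‖x‖ / ‖x‖ - k ‖y‖ / ‖y‖) • y‖
          ≤ ‖(k ‖x‖ / ‖x‖) • (x - y)‖ + ‖(k ‖x‖ / ‖x‖ - k ‖y‖ / ‖y‖) • y‖ := norm_add_le _ _
        _ ≤ c * ‖x - y‖ + (B + c * ‖x - y‖) := add_le_add h1 h2
        _ = 2 * c * ‖x - y‖ + B := by ring

/-- Radial homeomorphism from an order isomorphism of `ℝ` fixing `0`. -/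
lemma symm_zero (φ : ℝ ≃o ℝ) (hφ0 : φ 0 = 0) : φ.symm 0 = 0 :=
  φ.injective (by rw [φ.apply_symm_apply, hφ0])

def radHomeomorph (φ : ℝ ≃o ℝ) (hφ0 : φ 0 = 0) : E ≃ₜ E where
  toFun := radMap (φ.symm : ℝ → ℝ)
  invFun := radMap (φ : ℝ → ℝ)
  left_inv x := by
    apply radMap_radMap
    · exact symm_zero φ hφ0
    · intro r hr
      have := φ.symm.monotone (a := 0) (b := r) hr
      rwa [symm_zero φ hφ0] at this
    · intro r hr
      have := φ.symm.strictMono (a := 0) (b := r) hr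
      rwa [symm_zero φ hφ0] at this
    · intro r _; exact φ.apply_symm_apply r
  right_inv x := by
    apply radMap_radMap
    · exact hφ0
    · intro r hr
      have := φ.monotone (a := 0) (b := r) hr
      rwa [hφ0] at this
    · intro r hr
      have := φ.strictMono (a := 0) (b := r) hr
      rwa [hφ0] at this
    · intro r _; exact φ.symm_apply_apply r
  continuous_toFun := by
    apply continuous_radMap _ φ.symm.continuous
    · exact symm_zero φ hφ0
    · intro r hr
      have := φ.symm.monotone (a := 0) (b := r) hr
      rwa [symm_zero φ hφ0] at this
  continuous_invFun := by
    apply continuous_radMap _ φ.continuous hφ0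
    intro r hr
    have := φ.monotone (a := 0) (b := r) hr
    rwa [hφ0] at this

end Stmt3Aux

open Metric Set Filter Function

noncomputable section

namespace Stmt3Aux2

/-- Breakpoints. -/
def tt (g : ℕ → ℝ) (j : ℕ) : ℝ := ∑ k ∈ Finset.range j, g k

/-- Piecewise linear expansion map with slope `g k` on `[k, k+1]` and `g 0` on `(-∞,0]`. -/
def TT (g : ℕ → ℝ) (s : ℝ) : ℝ := tt g ⌊s⌋₊ + (s - (⌊s⌋₊ : ℝ)) * g ⌊s⌋₊

variable (g : ℕ → ℝ) (hg : ∀ k, 1 ≤ g k)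
include hg

lemma tt_succ (j : ℕ) : tt g (j + 1) = tt g j + g j := Finset.sum_range_succ g j

lemma tt_ge (j : ℕ) : (j : ℝ) ≤ tt g j := by
  induction j with
  | zero => simp [tt]
  | succ n ih =>
    rw [tt_succ g hg]
    have := hg n
    push_cast
    linarith

lemma tt_mono {j k : ℕ} (h : j ≤ k) : tt g j ≤ tt g k :=
  Finset.sum_le_sum_of_subset_of_nonneg (Finset.range_subset_range.mpr h)
    (fun i _ _ => le_trans zero_le_one (hg i))

lemma TT_nat (j : ℕ) : TT g (j : ℝ) = tt g j := by
  simp [TT]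

lemma TT_zero : TT g 0 = 0 := by
  simpa [tt] using TT_nat g hg 0

lemma TT_neg {s : ℝ} (h : s ≤ 0) : TT g s = s * g 0 := by
  rw [TT, Nat.floor_of_nonpos h]
  simp [tt]

lemma TT_segment (n : ℕ) (s : ℝ) (h1 : (n : ℝ) ≤ s) (h2 : s ≤ (n : ℝ) + 1) :
    TT g s = tt g n + (s - n) * g n := by
  rcases eq_or_lt_of_le h2 with rfl | hlt
  · have : ((n : ℝ) + 1) = ((n + 1 : ℕ) : ℝ) := by push_cast; ring
    rw [this, TT_nat g hg, tt_succ g hg]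
    push_cast
    ring
  · have hfl : ⌊s⌋₊ = n := by
      rw [Nat.floor_eq_iff (le_trans n.cast_nonneg h1)]
      exact ⟨h1, hlt⟩
    rw [TT, hfl]

lemma TT_expand (c : ℝ) (hc : 0 ≤ c) (hcg : ∀ k, c ≤ g k) :
    ∀ n : ℕ, ∀ u v : ℝ, 0 ≤ u → u ≤ v → v ≤ (n : ℝ) → c * (v - u) ≤ TT g v - TT g u := by
  intro n
  induction n with
  | zero =>
    intro u v hu huv hv
    have hv0 : v ≤ 0 := by exact_mod_cast hv
    have h1 : u = v := le_antisymm huv (hv0.trans hu)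
    simp [h1]
  | succ n ih =>
    intro u v hu huv hv
    push_cast at hv
    by_cases hvn : v ≤ (n : ℝ)
    · exact ih u v hu huv hvn
    · push_neg at hvn
      by_cases hun : (n : ℝ) ≤ u
      · rw [TT_segment g hg n u hun (by linarith), TT_segment g hg n v hvn.le hv]
        have h1 : c * (v - u) ≤ g n * (v - u) :=
          mul_le_mul_of_nonneg_right (hcg n) (by linarith)
        nlinarith
      · push_neg at hun
        have part1 : c * (v - (n : ℝ)) ≤ TT g v - TT g (n : ℝ) := by
          rw [TT_segment g hg n v hvn.le hv, TT_nat g hg]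
          have h1 : c * (v - n) ≤ g n * (v - n) :=
            mul_le_mul_of_nonneg_right (hcg n) (by linarith)
          nlinarith
        have part2 : c * ((n : ℝ) - u) ≤ TT g (n : ℝ) - TT g u :=
          ih u n hu hun.le le_rfl
        linarith

lemma TT_expand' (c : ℝ) (hc : 0 ≤ c) (hcg : ∀ k, c ≤ g k) (u v : ℝ) (hu : 0 ≤ u)
    (huv : u ≤ v) : c * (v - u) ≤ TT g v - TT g u :=
  TT_expand g hg c hc hcg ⌈v⌉₊ u v hu huv (Nat.le_ceil v)

lemma TT_sub_ge (u v : ℝ) (hu : 0 ≤ u) (huv : u ≤ v) : v - u ≤ TT g v - TT g u := by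
  simpa using TT_expand' g hg 1 zero_le_one hg u v hu huv

lemma TT_ge_self (v : ℝ) (hv : 0 ≤ v) : v ≤ TT g v := by
  have := TT_sub_ge g hg 0 v le_rfl hv
  rw [TT_zero g hg] at this
  linarith

lemma TT_strictMono : StrictMono (TT g) := by
  intro u v huv
  rcases le_or_gt v 0 with hv | hv
  · rw [TT_neg g hg (by linarith : u ≤ (0:ℝ)), TT_neg g hg hv]
    have := hg 0
    nlinarith
  · rcases lt_or_ge u 0 with hu | hu
    · have h1 : TT g u = u * g 0 := TT_neg g hg hu.le
      have h2 : 0 < TT g v := lt_of_lt_of_le hv (TT_ge_self g hg v hv.le)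
      have := hg 0
      nlinarith
    · have := TT_sub_ge g hg u v hu huv.le
      linarith

lemma exists_interval (y : ℝ) (hy : 0 ≤ y) :
    ∃ n : ℕ, tt g n ≤ y ∧ y < tt g (n + 1) := by
  have hex : ∃ k : ℕ, y < tt g (k + 1) := by
    obtain ⟨m, hm⟩ := exists_nat_gt y
    refine ⟨m, lt_of_lt_of_le hm (le_trans ?_ (tt_ge g hg (m + 1)))⟩
    push_cast
    linarith
  refine ⟨Nat.find hex, ?_, Nat.find_spec hex⟩
  rcases Nat.eq_zero_or_pos (Nat.find hex) with h0 | hpos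
  · rw [h0]
    simpa [tt] using hy
  · obtain ⟨m, hm⟩ := Nat.exists_eq_succ_of_ne_zero (Nat.pos_iff_ne_zero.mp hpos)
    have := Nat.find_min hex (m := m) (by omega)
    push_neg at this
    rw [hm]
    exact this

lemma TT_surjective : Surjective (TT g) := by
  intro y
  rcases le_or_gt y 0 with hy | hy
  · have hg0 : (0:ℝ) < g 0 := lt_of_lt_of_le zero_lt_one (hg 0)
    refine ⟨y / g 0, ?_⟩
    rw [TT_neg g hg (div_nonpos_of_nonpos_of_nonneg hy hg0.le)]
    field_simp
  · obtain ⟨n, h1, h2⟩ := exists_interval g hg y hy.le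
    have hgn : (0:ℝ) < g n := lt_of_lt_of_le zero_lt_one (hg n)
    have h3 : y - tt g n < g n := by
      have := tt_succ g hg n
      linarith
    refine ⟨(n : ℝ) + (y - tt g n) / g n, ?_⟩
    have hq0 : 0 ≤ (y - tt g n) / g n := div_nonneg (by linarith) hgn.le
    have hq1 : (y - tt g n) / g n < 1 := (div_lt_one hgn).mpr h3
    rw [TT_segment g hg n _ (by linarith) (by linarith)]
    field_simp
    ring

lemma TT_expand_local (k : ℕ) (u v : ℝ) (hu : (k : ℝ) ≤ u) (huv : u ≤ v)
    (hv : v ≤ (k : ℝ) + 2) :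
    min (g k) (g (k + 1)) * (v - u) ≤ TT g v - TT g u := by
  set m := min (g k) (g (k + 1)) with hm
  have hm1 : m ≤ g k := min_le_left _ _
  have hm2 : m ≤ g (k + 1) := min_le_right _ _
  have hmnn : 0 ≤ m := le_trans zero_le_one (le_min (hg k) (hg (k + 1)))
  have hcast : ((k + 1 : ℕ) : ℝ) = (k : ℝ) + 1 := by push_cast; ring
  rcases le_or_gt v ((k : ℝ) + 1) with hv1 | hv1
  · rw [TT_segment g hg k u hu (by linarith), TT_segment g hg k v (by linarith) hv1]
    have h1 : m * (v - u) ≤ g k * (v - u) := mul_le_mul_of_nonneg_right hm1 (by linarith)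
    nlinarith
  · rcases le_or_gt ((k : ℝ) + 1) u with hu1 | hu1
    · rw [TT_segment g hg (k + 1) u (by rw [hcast]; exact hu1) (by rw [hcast]; linarith),
        TT_segment g hg (k + 1) v (by rw [hcast]; linarith) (by rw [hcast]; linarith)]
      have h1 : m * (v - u) ≤ g (k + 1) * (v - u) := mul_le_mul_of_nonneg_right hm2 (by linarith)
      nlinarith
    · have part1 : m * (v - ((k : ℝ) + 1)) ≤ TT g v - TT g ((k : ℝ) + 1) := by
        rw [TT_segment g hg (k + 1) v (by rw [hcast]; linarith) (by rw [hcast]; linarith)]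
        have h0 : TT g ((k : ℝ) + 1) = tt g (k + 1) := by
          rw [← hcast, TT_nat g hg]
        rw [h0]
        have h1 : m * (v - ((k:ℝ) + 1)) ≤ g (k + 1) * (v - ((k:ℝ) + 1)) :=
          mul_le_mul_of_nonneg_right hm2 (by linarith)
        rw [hcast]
        nlinarith
      have part2 : m * (((k : ℝ) + 1) - u) ≤ TT g ((k : ℝ) + 1) - TT g u := by
        rw [TT_segment g hg k u hu (by linarith), TT_segment g hg k ((k:ℝ)+1) (by linarith) (by linarith)]
        have h1 : m * (((k:ℝ)+1) - u) ≤ g k * (((k:ℝ)+1) - u) :=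
          mul_le_mul_of_nonneg_right hm1 (by linarith)
        nlinarith
      linarith

end Stmt3Aux2

open Metric Set Filter Function

namespace Stmt3Main

theorem main {E : Type*} [NormedAddCommGroup E] [NormedSpace ℝ E] [ProperSpace E]
    (f : E → ℝ) (hf : Continuous f) : ∃ ψ : E ≃ₜ E, UniformContinuous (f ∘ ψ) := by
  classical
  -- moduli of uniform continuity on balls
  have Hη : ∀ j : ℕ, ∃ η : ℝ, 0 < η ∧ η ≤ 1 ∧
      ∀ u v : E, ‖u‖ ≤ (j:ℝ)+1 → ‖v‖ ≤ (j:ℝ)+1 → dist u v ≤ η →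
        dist (f u) (f v) ≤ (1/2:ℝ)^j := by
    intro j
    have hc : IsCompact (closedBall (0:E) ((j:ℝ)+1)) := isCompact_closedBall _ _
    have huc := hc.uniformContinuousOn_of_continuous hf.continuousOn
    rw [Metric.uniformContinuousOn_iff] at huc
    obtain ⟨δ, hδ, hδ'⟩ := huc ((1/2:ℝ)^j) (by positivity)
    refine ⟨min (δ/2) 1, by positivity, min_le_right _ _, ?_⟩
    intro u v hu hv huv
    have h1 : dist u v < δ := lt_of_le_of_lt (le_trans huv (min_le_left _ _)) (by linarith)
    exact (hδ' u (mem_closedBall_zero_iff.mpr hu) v (mem_closedBall_zero_iff.mpr hv) h1).le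
  choose η ηpos ηle1 ηspec using Hη
  -- gaps
  set g : ℕ → ℝ := fun k =>
    max 1 (max (4/η k) (max (4/η (k+1)) (8*((k:ℝ)+2)/η (k+1)))) with hgdef
  have hg : ∀ k, 1 ≤ g k := fun k => le_max_left _ _
  have hg1 : ∀ k, 4/η k ≤ g k := fun k =>
    le_trans (le_max_left _ _) (le_max_right _ _)
  have hg2 : ∀ k, 4/η (k+1) ≤ g k := fun k =>
    le_trans (le_trans (le_max_left _ _) (le_max_right _ _)) (le_max_right _ _)
  have hg3 : ∀ k : ℕ, 8*((k:ℝ)+2)/η (k+1) ≤ g k := fun k =>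
    le_trans (le_trans (le_max_right _ _) (le_max_right _ _)) (le_max_right _ _)
  -- the order isomorphism
  set φ : ℝ ≃o ℝ := StrictMono.orderIsoOfSurjective (Stmt3Aux2.TT g)
    (Stmt3Aux2.TT_strictMono g hg) (Stmt3Aux2.TT_surjective g hg) with hφdef
  have hφfun : (φ : ℝ → ℝ) = Stmt3Aux2.TT g :=
    StrictMono.coe_orderIsoOfSurjective _ _ _
  have hφ0 : φ 0 = 0 := by
    show (φ : ℝ → ℝ) 0 = 0
    rw [hφfun]
    exact Stmt3Aux2.TT_zero g hg
  have hs0 : (φ.symm : ℝ → ℝ) 0 = 0 := Stmt3Aux.symm_zero φ hφ0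
  have hnn : ∀ r : ℝ, 0 ≤ r → 0 ≤ (φ.symm : ℝ → ℝ) r := by
    intro r hr
    have := φ.symm.monotone hr
    rwa [hs0] at this
  have happ : ∀ r : ℝ, Stmt3Aux2.TT g ((φ.symm : ℝ → ℝ) r) = r := by
    intro r
    rw [← hφfun]
    exact φ.apply_symm_apply r
  have hler : ∀ r : ℝ, 0 ≤ r → (φ.symm : ℝ → ℝ) r ≤ r := by
    intro r hr
    have h1 := Stmt3Aux2.TT_ge_self g hg _ (hnn r hr)
    rwa [happ r] at h1
  have hlip : ∀ p q : ℝ, 0 ≤ p → p ≤ q →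
      (φ.symm : ℝ → ℝ) q - (φ.symm : ℝ → ℝ) p ≤ q - p := by
    intro p q hp hpq
    have h1 := Stmt3Aux2.TT_sub_ge g hg _ _ (hnn p hp) (φ.symm.monotone hpq)
    rwa [happ, happ] at h1
  -- the homeomorphism
  set ψ : E ≃ₜ E := Stmt3Aux.radHomeomorph φ hφ0 with hψdef
  have hψeq : ∀ z : E, ψ z = Stmt3Aux.radMap (φ.symm : ℝ → ℝ) z := fun _ => rfl
  have hnorm : ∀ z : E, ‖ψ z‖ = (φ.symm : ℝ → ℝ) ‖z‖ := fun z => by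
    rw [hψeq]; exact Stmt3Aux.norm_radMap _ hs0 hnn z
  refine ⟨ψ, ?_⟩
  rw [Metric.uniformContinuous_iff]
  intro ε hε
  obtain ⟨n, hn⟩ := exists_pow_lt_of_lt_one hε (by norm_num : (1/2:ℝ) < 1)
  set M : ℝ := Stmt3Aux2.tt g (n+1) + 1 with hMdef
  have hM0 : 0 ≤ M := by
    have := Stmt3Aux2.tt_ge g hg (n+1)
    have h2 : (0:ℝ) ≤ ((n+1:ℕ):ℝ) := Nat.cast_nonneg _
    linarith
  -- modulus on the closed ball of radius M
  have hcM : IsCompact (closedBall (0:E) M) := isCompact_closedBall _ _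
  have hucM := hcM.uniformContinuousOn_of_continuous hf.continuousOn
  rw [Metric.uniformContinuousOn_iff] at hucM
  obtain ⟨δ₁, hδ₁pos, hδ₁⟩ := hucM ε hε
  refine ⟨min 1 (δ₁/3), by positivity, ?_⟩
  have key : ∀ x y : E, ‖y‖ ≤ ‖x‖ → dist x y < min 1 (δ₁/3) →
      dist (f (ψ x)) (f (ψ y)) < ε := by
    intro x y hba hxy
    have hd1 : dist x y < 1 := lt_of_lt_of_le hxy (min_le_left _ _)
    have hd2 : dist x y < δ₁/3 := lt_of_lt_of_le hxy (min_le_right _ _)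
    have hne : ‖x - y‖ = dist x y := (dist_eq_norm x y).symm
    have hxy' : ‖x‖ - ‖y‖ ≤ ‖x - y‖ := norm_sub_norm_le x y
    have hmo : (φ.symm : ℝ → ℝ) ‖y‖ ≤ (φ.symm : ℝ → ℝ) ‖x‖ := φ.symm.monotone hba
    have hbnn : 0 ≤ (φ.symm : ℝ → ℝ) ‖y‖ := hnn _ (norm_nonneg y)
    have hlipxy : (φ.symm : ℝ → ℝ) ‖x‖ - (φ.symm : ℝ → ℝ) ‖y‖ ≤ ‖x‖ - ‖y‖ :=
      hlip _ _ (norm_nonneg y) hba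
    by_cases hcase : ‖x‖ ≤ M
    · -- near case
      have e1 : ‖Stmt3Aux.radMap (φ.symm : ℝ → ℝ) x - Stmt3Aux.radMap (φ.symm : ℝ → ℝ) y‖
          ≤ 2*1*‖x - y‖ + ‖x - y‖ := by
        apply Stmt3Aux.norm_radMap_sub_le _ hs0 x y hba 1 ‖x - y‖ zero_le_one
          (norm_nonneg _) (by linarith) hmo hbnn
        rw [one_mul]
        exact hler _ (norm_nonneg x)
      have hdψ : dist (ψ x) (ψ y) < δ₁ := by
        rw [dist_eq_norm, hψeq, hψeq]
        calc ‖Stmt3Aux.radMap (φ.symm : ℝ → ℝ) x - Stmt3Aux.radMap (φ.symm : ℝ → ℝ) y‖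
            ≤ 2*1*‖x - y‖ + ‖x - y‖ := e1
          _ = 3 * dist x y := by rw [hne]; ring
          _ < δ₁ := by linarith
      have hψxM : ψ x ∈ closedBall (0:E) M := by
        rw [mem_closedBall_zero_iff, hnorm]
        exact le_trans (hler _ (norm_nonneg x)) hcase
      have hψyM : ψ y ∈ closedBall (0:E) M := by
        rw [mem_closedBall_zero_iff, hnorm]
        exact le_trans (hler _ (norm_nonneg y)) (le_trans hba hcase)
      exact hδ₁ (ψ x) hψxM (ψ y) hψyM hdψ
    · -- far case
      push_neg at hcase
      have hb_lb : ‖x‖ - 1 ≤ ‖y‖ := by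
        have : ‖x‖ - ‖y‖ ≤ dist x y := by rw [← hne]; exact hxy'
        linarith
      obtain ⟨j, hj1, hj2⟩ := Stmt3Aux2.exists_interval g hg ‖x‖ (norm_nonneg x)
      have hjn : n + 1 ≤ j := by
        by_contra hcon
        push_neg at hcon
        have h1 : Stmt3Aux2.tt g (j+1) ≤ Stmt3Aux2.tt g (n+1) :=
          Stmt3Aux2.tt_mono g hg (by omega)
        have h2 : Stmt3Aux2.tt g (n+1) + 1 < ‖x‖ := hcase
        linarith
      have hj1' : 1 ≤ j := by omega
      -- bounds on inverse values
      have hTTj : (φ.symm : ℝ → ℝ) (Stmt3Aux2.tt g j) = (j:ℝ) := by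
        have h1 : (φ : ℝ → ℝ) (j:ℝ) = Stmt3Aux2.tt g j := by
          rw [hφfun]; exact Stmt3Aux2.TT_nat g hg j
        rw [← h1]
        exact φ.symm_apply_apply _
      have hTTj1 : (φ.symm : ℝ → ℝ) (Stmt3Aux2.tt g (j+1)) = ((j:ℝ)+1) := by
        have h1 : (φ : ℝ → ℝ) ((j:ℝ)+1) = Stmt3Aux2.tt g (j+1) := by
          have hc : ((j:ℝ)+1) = ((j+1:ℕ):ℝ) := by push_cast; ring
          rw [hφfun, hc]
          exact Stmt3Aux2.TT_nat g hg (j+1)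
        rw [← h1]
        exact φ.symm_apply_apply _
      have hhaj : (j:ℝ) ≤ (φ.symm : ℝ → ℝ) ‖x‖ := by
        rw [← hTTj]; exact φ.symm.monotone hj1
      have hhaj2 : (φ.symm : ℝ → ℝ) ‖x‖ ≤ (j:ℝ) + 1 := by
        rw [← hTTj1]; exact φ.symm.monotone hj2.le
      have hhb1 : (j:ℝ) - 1 ≤ (φ.symm : ℝ → ℝ) ‖y‖ := by
        have h1 : ‖x‖ - ‖y‖ ≤ 1 := by
          have : ‖x‖ - ‖y‖ ≤ dist x y := by rw [← hne]; exact hxy'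
          linarith
        linarith
      -- local expansion with k := j - 1
      have hkc : ((j - 1 : ℕ) : ℝ) = (j:ℝ) - 1 := by
        rw [Nat.cast_sub hj1', Nat.cast_one]
      have hk1 : j - 1 + 1 = j := by omega
      have hloc : min (g (j-1)) (g (j-1+1)) *
          ((φ.symm : ℝ → ℝ) ‖x‖ - (φ.symm : ℝ → ℝ) ‖y‖) ≤ ‖x‖ - ‖y‖ := by
        have h1 := Stmt3Aux2.TT_expand_local g hg (j-1)
          ((φ.symm : ℝ → ℝ) ‖y‖) ((φ.symm : ℝ → ℝ) ‖x‖)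
          (by rw [hkc]; linarith) hmo (by rw [hkc]; linarith)
        rwa [happ, happ] at h1
      have hηj : 0 < η j := ηpos j
      have hminge : 4 / η j ≤ min (g (j-1)) (g (j-1+1)) := by
        apply le_min
        · have := hg2 (j-1); rwa [hk1] at this
        · rw [hk1]; exact hg1 j
      have hDnn : 0 ≤ (φ.symm : ℝ → ℝ) ‖x‖ - (φ.symm : ℝ → ℝ) ‖y‖ := by linarith
      have hD : (φ.symm : ℝ → ℝ) ‖x‖ - (φ.symm : ℝ → ℝ) ‖y‖ ≤ η j / 4 := by
        have step : (4/η j) * ((φ.symm : ℝ → ℝ) ‖x‖ - (φ.symm : ℝ → ℝ) ‖y‖) ≤ ‖x‖ - ‖y‖ :=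
          le_trans (mul_le_mul_of_nonneg_right hminge hDnn) hloc
        have hab1 : ‖x‖ - ‖y‖ ≤ 1 := by
          have : ‖x‖ - ‖y‖ ≤ dist x y := by rw [← hne]; exact hxy'
          linarith
        have h5 : 4/η j * ((φ.symm : ℝ → ℝ) ‖x‖ - (φ.symm : ℝ → ℝ) ‖y‖) * η j ≤ 1 * η j :=
          mul_le_mul_of_nonneg_right (step.trans hab1) hηj.le
        have e : 4/η j * ((φ.symm : ℝ → ℝ) ‖x‖ - (φ.symm : ℝ → ℝ) ‖y‖) * η j
            = 4 * ((φ.symm : ℝ → ℝ) ‖x‖ - (φ.symm : ℝ → ℝ) ‖y‖) := by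
          field_simp
        rw [e, one_mul] at h5
        linarith
      -- bound h ‖x‖ ≤ (η j / 8) * ‖x‖
      have hga : g (j-1) ≤ Stmt3Aux2.tt g j := by
        apply Finset.single_le_sum (f := g) (fun i _ => le_trans zero_le_one (hg i))
        exact Finset.mem_range.mpr (by omega)
      have hg3' : 8*((j:ℝ)+1)/η j ≤ g (j-1) := by
        have h1 := hg3 (j-1)
        rw [hk1] at h1
        rw [hkc] at h1
        have e : (j:ℝ) - 1 + 2 = (j:ℝ) + 1 := by ring
        rwa [e] at h1
      have hc8 : (φ.symm : ℝ → ℝ) ‖x‖ ≤ (η j / 8) * ‖x‖ := by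
        have hxge : 8*((j:ℝ)+1)/η j ≤ ‖x‖ := by linarith
        have h1 : (η j/8) * (8*((j:ℝ)+1)/η j) ≤ (η j/8) * ‖x‖ :=
          mul_le_mul_of_nonneg_left hxge (by positivity)
        have e : (η j/8) * (8*((j:ℝ)+1)/η j) = (j:ℝ)+1 := by
          field_simp
        linarith
      -- main estimate
      have hkey : ‖Stmt3Aux.radMap (φ.symm : ℝ → ℝ) x - Stmt3Aux.radMap (φ.symm : ℝ → ℝ) y‖
          ≤ 2*(η j/8)*‖x - y‖ + η j/4 :=
        Stmt3Aux.norm_radMap_sub_le _ hs0 x y hba (η j/8) (η j/4) (by positivity)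
          (by positivity) hD hmo hbnn hc8
      have hdistψ : dist (ψ x) (ψ y) ≤ η j := by
        rw [dist_eq_norm, hψeq, hψeq]
        have h1 : 2*(η j/8)*‖x - y‖ ≤ 2*(η j/8)*1 := by
          apply mul_le_mul_of_nonneg_left _ (by positivity)
          rw [hne]; linarith
        linarith
      have hfb := ηspec j (ψ x) (ψ y)
        (by rw [hnorm]; exact hhaj2)
        (by rw [hnorm]; linarith) hdistψ
      have hpow : (1/2:ℝ)^j ≤ (1/2:ℝ)^n :=
        pow_le_pow_of_le_one (by norm_num) (by norm_num) (by omega)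
      linarith
  intro x y hxy
  simp only [Function.comp_apply]
  rcases le_total ‖y‖ ‖x‖ with hc | hc
  · exact key x y hc hxy
  · rw [dist_comm]
    exact key y x hc (by rwa [dist_comm])

end Stmt3Main

/-- For every continuous `f : ℝ^d → ℝ` there is a self-homeomorphism
`ψ` of `ℝ^d` such that `f ∘ ψ` is uniformly continuous. -/
theorem stmt_3 {d : ℕ} (f : EuclideanSpace ℝ (Fin d) → ℝ) (hf : Continuous f) :
    ∃ ψ : Homeomorph (EuclideanSpace ℝ (Fin d)) (EuclideanSpace ℝ (Fin d)),
      UniformContinuous (f ∘ ψ) := by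
  exact Stmt3Main.main f hf
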